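/- Let c : ℝ^p → ℝ be given by c(z) = min(h(‖z‖), C_r), where h : ℝ≥0 → ℝ≥0 is non-decreasing, ‖·‖ is a norm on ℝ^p, and C_r > 0. For v ≥ 0 let B(v) denote the ball centered at the origin with (Lebesgue) volume v, and define F(v) = ∫_{B(v)} c(z) dz. Then F is convex on [0, ∞). -/

import Mathlib

open MeasureTheory Metric

/-- With `c z = min (h ‖z‖) C_r` (h non-decreasing, non-negative, `C_r > 0`),
and `B(v)` the norm-ball centered at the origin of Lebesgue volume `v` (radius `R v`),
the function `F v = ∫_{B(v)} c z dz` is convex on `[0, ∞)`. -/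
theorem stmt0 {E : Type*} [NormedAddCommGroup E] [NormedSpace ℝ E]
    [MeasurableSpace E] [BorelSpace E] [FiniteDimensional ℝ E]
    (μ : Measure E) [μ.IsAddHaarMeasure]
    (h : ℝ → ℝ) (hmono : Monotone h) (hnonneg : ∀ d, 0 ≤ h d)
    (Cr : ℝ) (hCr : 0 < Cr)
    (R : ℝ → ℝ) (hRnonneg : ∀ v ∈ Set.Ici (0 : ℝ), 0 ≤ R v)
    (hR : ∀ v ∈ Set.Ici (0 : ℝ), μ (closedBall (0 : E) (R v)) = ENNReal.ofReal v) :
    ConvexOn ℝ (Set.Ici (0 : ℝ))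
      (fun v => ∫ z in closedBall (0 : E) (R v), min (h ‖z‖) Cr ∂μ) := by
  set c : E → ℝ := fun z => min (h ‖z‖) Cr with hcdef
  have hcmeas : Measurable c :=
    (hmono.measurable.comp measurable_norm).min measurable_const
  have hc0 : ∀ z, 0 ≤ c z := fun z => le_min (hnonneg _) hCr.le
  have hcCr : ∀ z, c z ≤ Cr := fun z => min_le_right _ _
  -- integrability on each ball
  have hint : ∀ v, 0 ≤ v → IntegrableOn c (closedBall (0 : E) (R v)) μ := by
    intro v hv
    have hconst : IntegrableOn (fun _ : E => Cr) (closedBall (0 : E) (R v)) μ := by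
      exact integrableOn_const (by rw [hR v hv]; exact ENNReal.ofReal_ne_top)
    refine hconst.mono' hcmeas.aestronglyMeasurable ?_
    filter_upwards with z
    rw [Real.norm_eq_abs, abs_of_nonneg (hc0 z)]
    exact hcCr z
  -- R is monotone on [0, ∞)
  have hRmono : ∀ a b : ℝ, 0 ≤ a → a ≤ b → R a ≤ R b := by
    intro a b ha hab
    by_contra hlt
    push_neg at hlt
    have hsub : closedBall (0 : E) (R b) ⊆ closedBall (0 : E) (R a) :=
      closedBall_subset_closedBall hlt.le
    have := measure_mono (μ := μ) hsub
    rw [hR a ha, hR b (ha.trans hab)] at this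
    have hba : b ≤ a := by
      have := (ENNReal.ofReal_le_ofReal_iff ha).mp this
      exact this
    have : a = b := le_antisymm hab hba
    subst this
    exact absurd rfl hlt.ne'
  -- annulus facts
  have key : ∀ a b : ℝ, 0 ≤ a → a ≤ b →
      ((∫ z in closedBall (0 : E) (R b), c z ∂μ) -
        ∫ z in closedBall (0 : E) (R a), c z ∂μ)
      = ∫ z in closedBall (0 : E) (R b) \ closedBall (0 : E) (R a), c z ∂μ := by
    intro a b ha hab
    exact (integral_diff measurableSet_closedBall (hint b (ha.trans hab))
      (closedBall_subset_closedBall (hRmono a b ha hab))).symm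
  have hμA : ∀ a b : ℝ, 0 ≤ a → a ≤ b →
      μ (closedBall (0 : E) (R b) \ closedBall (0 : E) (R a))
        = ENNReal.ofReal (b - a) := by
    intro a b ha hab
    rw [measure_diff (closedBall_subset_closedBall (hRmono a b ha hab))
      measurableSet_closedBall.nullMeasurableSet
      (by rw [hR a ha]; exact ENNReal.ofReal_ne_top),
      hR a ha, hR b (ha.trans hab), ← ENNReal.ofReal_sub b ha]
  have hintA : ∀ a b : ℝ, 0 ≤ a → a ≤ b →
      IntegrableOn c (closedBall (0 : E) (R b) \ closedBall (0 : E) (R a)) μ := by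
    intro a b ha hab
    exact (hint b (ha.trans hab)).mono_set Set.diff_subset
  have hAmeas : ∀ a b : ℝ,
      MeasurableSet (closedBall (0 : E) (R b) \ closedBall (0 : E) (R a)) :=
    fun a b => measurableSet_closedBall.diff measurableSet_closedBall
  have hintconst : ∀ (a b K : ℝ), 0 ≤ a → a ≤ b →
      IntegrableOn (fun _ : E => K)
        (closedBall (0 : E) (R b) \ closedBall (0 : E) (R a)) μ := by
    intro a b K ha hab
    exact integrableOn_const (by rw [hμA a b ha hab]; exact ENNReal.ofReal_ne_top)
  -- upper bound on annulus integral
  have hup : ∀ a b : ℝ, 0 ≤ a → a ≤ b →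
      (∫ z in closedBall (0 : E) (R b) \ closedBall (0 : E) (R a), c z ∂μ)
        ≤ min (h (R b)) Cr * (b - a) := by
    intro a b ha hab
    have : (∫ z in closedBall (0 : E) (R b) \ closedBall (0 : E) (R a), c z ∂μ)
        ≤ ∫ _z in closedBall (0 : E) (R b) \ closedBall (0 : E) (R a),
            (min (h (R b)) Cr) ∂μ := by
      apply setIntegral_mono_on (hintA a b ha hab) (hintconst a b _ ha hab) (hAmeas a b)
      intro z hz
      have hz' : ‖z‖ ≤ R b := by
        have := hz.1
        rwa [mem_closedBall, dist_zero_right] at this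
      exact min_le_min (hmono hz') le_rfl
    refine this.trans ?_
    rw [setIntegral_const, measureReal_def, hμA a b ha hab, smul_eq_mul,
      ENNReal.toReal_ofReal (by linarith), mul_comm]
  -- lower bound on annulus integral
  have hlo : ∀ a b : ℝ, 0 ≤ a → a ≤ b →
      min (h (R a)) Cr * (b - a)
        ≤ ∫ z in closedBall (0 : E) (R b) \ closedBall (0 : E) (R a), c z ∂μ := by
    intro a b ha hab
    have : (∫ _z in closedBall (0 : E) (R b) \ closedBall (0 : E) (R a),
            (min (h (R a)) Cr) ∂μ)
        ≤ ∫ z in closedBall (0 : E) (R b) \ closedBall (0 : E) (R a), c z ∂μ := by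
      apply setIntegral_mono_on (hintconst a b _ ha hab) (hintA a b ha hab) (hAmeas a b)
      intro z hz
      have hz' : R a ≤ ‖z‖ := by
        have := hz.2
        rw [mem_closedBall, dist_zero_right] at this
        exact (not_le.mp this).le
      exact min_le_min (hmono hz') le_rfl
    refine le_trans ?_ this
    rw [setIntegral_const, measureReal_def, hμA a b ha hab, smul_eq_mul,
      ENNReal.toReal_ofReal (by linarith), mul_comm]
  -- slope criterion
  apply convexOn_of_slope_mono_adjacent (convex_Ici 0)
  intro x y z hx hz hxy hyz
  have hy : (0:ℝ) ≤ y := le_of_lt (lt_of_le_of_lt hx hxy)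
  show ((∫ w in closedBall (0 : E) (R y), c w ∂μ) -
      ∫ w in closedBall (0 : E) (R x), c w ∂μ) / (y - x)
    ≤ ((∫ w in closedBall (0 : E) (R z), c w ∂μ) -
      ∫ w in closedBall (0 : E) (R y), c w ∂μ) / (z - y)
  rw [key x y hx hxy.le, key y z hy hyz.le]
  have h1 : (∫ w in closedBall (0 : E) (R y) \ closedBall (0 : E) (R x), c w ∂μ)
      / (y - x) ≤ min (h (R y)) Cr := by
    rw [div_le_iff₀ (by linarith)]
    exact hup x y hx hxy.le
  have h2 : min (h (R y)) Cr ≤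
      (∫ w in closedBall (0 : E) (R z) \ closedBall (0 : E) (R y), c w ∂μ)
      / (z - y) := by
    rw [le_div_iff₀ (by linarith)]
    exact hlo y z hy hyz.le
  exact h1.trans h2
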